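/- The regular open algebra of the product space 2^(ℵ₂ × ℕ) (with the product topology, 2 discrete) satisfies the countable chain condition: every antichain in it is countable. -/

import Mathlib

open Cardinal

/-- A set is regular open if it equals the interior of its closure. -/
def IsRegularOpen {X : Type*} [TopologicalSpace X] (U : Set X) : Prop :=
  interior (closure U) = U

/-- The underlying type of `ℵ₂`. -/
noncomputable abbrev Aleph2 : Type 1 := (aleph 2).ord.ToType

/-- The Cohen forcing space `2^(ℵ₂ × ℕ)` with the product topology (`2` discrete). -/
abbrev CohenSpace : Type 1 := Aleph2 × ℕ → Bool

open MeasureTheory in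
/-- Any family of pairwise disjoint open sets in the Cohen space has countable range:
transfer the Haar measure from the compact group `(ℵ₂ × ℕ) → ZMod 2` and use that
disjoint families of positive-measure sets in a finite measure space are countable. -/
theorem cohen_space_ccc_open {ι : Type*} (a : ι → Set CohenSpace)
    (ha : ∀ i, IsOpen (a i))
    (hanti : ∀ i j, i ≠ j → a i ∩ a j = ∅) :
    (Set.range a).Countable := by
  letI : TopologicalSpace (ZMod 2) := ⊥
  haveI : DiscreteTopology (ZMod 2) := ⟨rfl⟩
  haveI : IsTopologicalAddGroup (ZMod 2) :=
    { continuous_add := continuous_of_discreteTopology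
      continuous_neg := continuous_of_discreteTopology }
  letI : MeasurableSpace ((Aleph2 × ℕ) → ZMod 2) := borel _
  haveI : BorelSpace ((Aleph2 × ℕ) → ZMod 2) := ⟨rfl⟩
  letI : MeasurableSpace CohenSpace := borel _
  haveI : BorelSpace CohenSpace := ⟨rfl⟩
  let K₀ : TopologicalSpace.PositiveCompacts ((Aleph2 × ℕ) → ZMod 2) := ⊤
  let ν : Measure ((Aleph2 × ℕ) → ZMod 2) := Measure.addHaarMeasure K₀
  haveI : ν.IsAddHaarMeasure := Measure.isAddHaarMeasure_addHaarMeasure K₀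
  haveI : IsFiniteMeasure ν := CompactSpace.isFiniteMeasure
  -- a homeomorphism from the `ZMod 2` product space to the Cohen space
  let e : ZMod 2 ≃ Bool :=
    ⟨fun x => decide (x = 1), fun b => if b then 1 else 0, by decide, by decide⟩
  let h : ((Aleph2 × ℕ) → ZMod 2) ≃ₜ CohenSpace :=
    Homeomorph.piCongrRight fun _ =>
      ⟨e, continuous_of_discreteTopology, continuous_of_discreteTopology⟩
  let μ : Measure CohenSpace := ν.map h
  have hmap : ∀ s : Set CohenSpace, MeasurableSet s → μ s = ν (h ⁻¹' s) := fun s hs =>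
    Measure.map_apply h.continuous.measurable hs
  haveI : IsFiniteMeasure μ :=
    ⟨by rw [hmap _ MeasurableSet.univ]; exact measure_lt_top ν _⟩
  have hpos : ∀ s : Set CohenSpace, IsOpen s → s.Nonempty → 0 < μ s := by
    intro s hs hsne
    rw [hmap s hs.measurableSet]
    exact (hs.preimage h.continuous).measure_pos ν
      (hsne.preimage h.surjective)
  have hdisj : Pairwise (Function.onFun Disjoint a) := fun i j hij =>
    Set.disjoint_iff_inter_eq_empty.2 (hanti i j hij)
  have hcnt : {i : ι | 0 < μ (a i)}.Countable :=
    Measure.countable_meas_pos_of_disjoint_iUnion (μ := μ)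
      (fun i => (ha i).measurableSet) hdisj
  have hsub : Set.range a ⊆ insert ∅ (a '' {i : ι | 0 < μ (a i)}) := by
    rintro _ ⟨i, rfl⟩
    by_cases hne : a i = ∅
    · exact Or.inl hne
    · exact Or.inr ⟨i, hpos _ (ha i) (Set.nonempty_iff_ne_empty.2 hne), rfl⟩
  exact ((hcnt.image a).insert ∅).mono hsub

/-- The regular open algebra of `2^(ℵ₂ × ℕ)` has the countable chain condition:
every antichain (indexed family of regular opens with pairwise intersection empty,
intersection being the meet of the algebra) has countable image. -/
theorem cohen_algebra_ccc {ι : Type*} (a : ι → Set CohenSpace)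
    (ha : ∀ i, IsRegularOpen (a i))
    (hanti : ∀ i j, i ≠ j → a i ∩ a j = ∅) :
    (Set.range a).Countable := by
  refine cohen_space_ccc_open a (fun i => ?_) hanti
  rw [← ha i]; exact isOpen_interior
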